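/- Let k ∈ ℝ with k ≠ 1 and take the defining function H(x₂,x₃,x₄) = x₃^{2k} (the homogeneous Siklos metric with ε = 1). The immersion F(u₁,u₂,u₃) = (u₁, u₃^{1−k}/(k−1), u₃, −u₂u₃/β), defined on V = {u ∈ ℝ³ : u₃ > 0} with unit normal ξ(u) = (u₃^{k+1}/β, 0, u₃/β, 0), is a parallel hypersurface of the Siklos metric (∇h ≡ 0) which is not totally geodesic (h ≢ 0). -/

import Mathlib

open scoped BigOperators

/-- Partial derivative of `f : ℝⁿ → ℝ` in the `i`-th coordinate direction. -/
noncomputable def pd {n : ℕ} (i : Fin n) (f : (Fin n → ℝ) → ℝ) (x : Fin n → ℝ) : ℝ :=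
  deriv (fun t => f (Function.update x i t)) (x i)

/-- Christoffel symbols `Γᵏᵢⱼ` of a metric field `g`. -/
noncomputable def christoffel {n : ℕ} (g : (Fin n → ℝ) → Matrix (Fin n) (Fin n) ℝ)
    (x : Fin n → ℝ) (k i j : Fin n) : ℝ :=
  (1 / 2) * ∑ l, (g x)⁻¹ k l *
    (pd i (fun y => g y l j) x + pd j (fun y => g y l i) x - pd l (fun y => g y i j) x)

/-- `curv g x i j k l` is the `l`-th component of `R(∂ᵢ,∂ⱼ)∂ₖ` at `x`
(convention `R(X,Y) = [∇_X,∇_Y] − ∇_{[X,Y]}`). -/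
noncomputable def curv {n : ℕ} (g : (Fin n → ℝ) → Matrix (Fin n) (Fin n) ℝ)
    (x : Fin n → ℝ) (i j k l : Fin n) : ℝ :=
  pd i (fun y => christoffel g y l j k) x - pd j (fun y => christoffel g y l i k) x
    + ∑ m, (christoffel g x l i m * christoffel g x m j k
        - christoffel g x l j m * christoffel g x m i k)

/-- The Siklos metric with parameter `β` and defining function `H = H(x₂,x₃,x₄)`;
indices `0,1,2,3` correspond to the coordinates `x₁,x₂,x₃,x₄`. -/
noncomputable def siklos (β : ℝ) (H : ℝ → ℝ → ℝ → ℝ) (x : Fin 4 → ℝ) :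
    Matrix (Fin 4) (Fin 4) ℝ :=
  Matrix.of fun i j =>
    if (i = 0 ∧ j = 1) ∨ (i = 1 ∧ j = 0) ∨ (i = 2 ∧ j = 2) ∨ (i = 3 ∧ j = 3) then
      β ^ 2 / x 2 ^ 2
    else if i = 1 ∧ j = 1 then β ^ 2 / x 2 ^ 2 * H (x 1) (x 2) (x 3)
    else 0

/-- `H'₂`. -/
noncomputable def H2 (H : ℝ → ℝ → ℝ → ℝ) (a b c : ℝ) : ℝ := deriv (fun t => H t b c) a
/-- `H'₃`. -/
noncomputable def H3 (H : ℝ → ℝ → ℝ → ℝ) (a b c : ℝ) : ℝ := deriv (fun t => H a t c) b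
/-- `H'₄`. -/
noncomputable def H4 (H : ℝ → ℝ → ℝ → ℝ) (a b c : ℝ) : ℝ := deriv (fun t => H a b t) c
/-- `H''₂₃`. -/
noncomputable def H23 (H : ℝ → ℝ → ℝ → ℝ) (a b c : ℝ) : ℝ := deriv (fun t => H3 H t b c) a
/-- `H''₃₃`. -/
noncomputable def H33 (H : ℝ → ℝ → ℝ → ℝ) (a b c : ℝ) : ℝ := deriv (fun t => H3 H a t c) b
/-- `H''₃₄`. -/
noncomputable def H34 (H : ℝ → ℝ → ℝ → ℝ) (a b c : ℝ) : ℝ := deriv (fun t => H4 H a t c) b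
/-- `H''₄₄`. -/
noncomputable def H44 (H : ℝ → ℝ → ℝ → ℝ) (a b c : ℝ) : ℝ := deriv (fun t => H4 H a b t) c

/-- Ricci tensor `Ricⱼₖ = Σᵢ (R(∂ᵢ,∂ⱼ)∂ₖ)ⁱ` of the Siklos metric. -/
noncomputable def ricci (β : ℝ) (H : ℝ → ℝ → ℝ → ℝ) (x : Fin 4 → ℝ) (j k : Fin 4) : ℝ :=
  ∑ i, curv (siklos β H) x i j k i

/-- Scalar curvature of the Siklos metric. -/
noncomputable def scal (β : ℝ) (H : ℝ → ℝ → ℝ → ℝ) (x : Fin 4 → ℝ) : ℝ :=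
  ∑ j, ∑ k, (siklos β H x)⁻¹ j k * ricci β H x j k

/-- `g(X,Y) = Σᵢⱼ gᵢⱼ Xⁱ Yʲ`. -/
noncomputable def gApply (M : Matrix (Fin 4) (Fin 4) ℝ) (X Y : Fin 4 → ℝ) : ℝ :=
  ∑ i, ∑ j, M i j * X i * Y j

/-- Curvature applied to arbitrary vectors: `R(X,Y)Z = Σᵢⱼₖ XⁱYʲZᵏ R(∂ᵢ,∂ⱼ)∂ₖ`. -/
noncomputable def Rmulti (β : ℝ) (H : ℝ → ℝ → ℝ → ℝ) (x : Fin 4 → ℝ)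
    (X Y Z : Fin 4 → ℝ) (l : Fin 4) : ℝ :=
  ∑ i, ∑ j, ∑ k, X i * Y j * Z k * curv (siklos β H) x i j k l

/-- `Rₐᵦ𝒸𝒹 = g(R(∂ₐ,∂ᵦ)∂𝒹, ∂𝒸)`. -/
noncomputable def Rlow (β : ℝ) (H : ℝ → ℝ → ℝ → ℝ) (x : Fin 4 → ℝ) (a b c d : Fin 4) : ℝ :=
  ∑ l, siklos β H x l c * curv (siklos β H) x a b d l

/-- The Weyl tensor (in dimension 4) of the Siklos metric. -/
noncomputable def weyl (β : ℝ) (H : ℝ → ℝ → ℝ → ℝ) (x : Fin 4 → ℝ) (a b c d : Fin 4) : ℝ :=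
  Rlow β H x a b c d
    - (1 / 2) * (siklos β H x a c * ricci β H x b d - siklos β H x a d * ricci β H x b c
        + siklos β H x b d * ricci β H x a c - siklos β H x b c * ricci β H x a d)
    + scal β H x / 6 *
        (siklos β H x a c * siklos β H x b d - siklos β H x a d * siklos β H x b c)

/-- Coordinate tangent vector `F_{uᵢ}` of an immersion `F : ℝ³ → ℝ⁴`. -/
noncomputable def Fu (F : (Fin 3 → ℝ) → Fin 4 → ℝ) (i : Fin 3) (u : Fin 3 → ℝ) :
    Fin 4 → ℝ := fun k => pd i (fun v => F v k) u

/-- Ambient covariant derivative `DᵢF_{uⱼ}` along `F`, for the Siklos metric. -/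
noncomputable def ambD (β : ℝ) (H : ℝ → ℝ → ℝ → ℝ) (F : (Fin 3 → ℝ) → Fin 4 → ℝ)
    (i j : Fin 3) (u : Fin 3 → ℝ) : Fin 4 → ℝ :=
  fun k => pd i (fun v => Fu F j v k) u
    + ∑ l, ∑ m, christoffel (siklos β H) (F u) k l m * Fu F i u l * Fu F j u m

/-- Second fundamental form `hᵢⱼ = g(DᵢF_{uⱼ}, ξ)` of `F` with unit normal `ξ`. -/
noncomputable def sff (β : ℝ) (H : ℝ → ℝ → ℝ → ℝ) (F ξ : (Fin 3 → ℝ) → Fin 4 → ℝ)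
    (i j : Fin 3) (u : Fin 3 → ℝ) : ℝ :=
  gApply (siklos β H (F u)) (ambD β H F i j u) (ξ u)

/-- Induced metric `ĝᵢⱼ = g(F_{uᵢ}, F_{uⱼ})` of the hypersurface. -/
noncomputable def inducedMetric (β : ℝ) (H : ℝ → ℝ → ℝ → ℝ) (F : (Fin 3 → ℝ) → Fin 4 → ℝ)
    (u : Fin 3 → ℝ) : Matrix (Fin 3) (Fin 3) ℝ :=
  Matrix.of fun i j => gApply (siklos β H (F u)) (Fu F i u) (Fu F j u)

/-- Covariant derivative of the second fundamental form,
`(∇h)ₖᵢⱼ = ∂ₖhᵢⱼ − Σₗ Γ̂ˡₖᵢ hₗⱼ − Σₗ Γ̂ˡₖⱼ hᵢₗ`. -/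
noncomputable def nablah (β : ℝ) (H : ℝ → ℝ → ℝ → ℝ) (F ξ : (Fin 3 → ℝ) → Fin 4 → ℝ)
    (k i j : Fin 3) (u : Fin 3 → ℝ) : ℝ :=
  pd k (fun v => sff β H F ξ i j v) u
    - ∑ l, christoffel (inducedMetric β H F) u l k i * sff β H F ξ l j u
    - ∑ l, christoffel (inducedMetric β H F) u l k j * sff β H F ξ i l u

/-- Mean curvature `(1/3) Σᵢⱼ ĝⁱʲ hᵢⱼ` of the hypersurface. -/
noncomputable def meanCurv (β : ℝ) (H : ℝ → ℝ → ℝ → ℝ) (F ξ : (Fin 3 → ℝ) → Fin 4 → ℝ)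
    (u : Fin 3 → ℝ) : ℝ :=
  (1 / 3) * ∑ i, ∑ j, (inducedMetric β H F u)⁻¹ i j * sff β H F ξ i j u

set_option maxHeartbeats 1000000 in
section
namespace S18

/-- Siklos metric as an explicit matrix function of `s = x 2`. -/
noncomputable def sikM (β k s : ℝ) : Matrix (Fin 4) (Fin 4) ℝ :=
  !![0, β^2/s^2, 0, 0;
     β^2/s^2, β^2/s^2 * s^(2*k), 0, 0;
     0, 0, β^2/s^2, 0;
     0, 0, 0, β^2/s^2]

lemma siklos_eq (β k : ℝ) (x : Fin 4 → ℝ) :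
    siklos β (fun _ b _ => b ^ (2*k)) x = sikM β k (x 2) := by
  ext i j
  fin_cases i <;> fin_cases j <;> simp [siklos, sikM, Matrix.vecHead, Matrix.vecTail]

lemma rpow_two_mul {s : ℝ} (k : ℝ) (hs : 0 < s) : s ^ (2*k) = (s^k)^2 := by
  rw [two_mul, Real.rpow_add hs, sq]

noncomputable def sikInvM (β k s : ℝ) : Matrix (Fin 4) (Fin 4) ℝ :=
  !![-(s^k)^2*s^2/β^2, s^2/β^2, 0, 0;
     s^2/β^2, 0, 0, 0;
     0, 0, s^2/β^2, 0;
     0, 0, 0, s^2/β^2]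

lemma sik_inv (β k : ℝ) (hβ : β ≠ 0) (x : Fin 4 → ℝ) (hx : 0 < x 2) :
    (siklos β (fun _ b _ => b ^ (2*k)) x)⁻¹ = sikInvM β k (x 2) := by
  apply Matrix.inv_eq_right_inv
  rw [siklos_eq]
  have hs : x 2 ≠ 0 := hx.ne'
  ext i j
  fin_cases i <;> fin_cases j <;>
    · simp [sikM, sikInvM, Matrix.mul_apply, Fin.sum_univ_four, rpow_two_mul k hx, Matrix.vecHead, Matrix.vecTail]
      try field_simp
      try ring

lemma hd_div_sq (c s : ℝ) (hs : s ≠ 0) :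
    HasDerivAt (fun t : ℝ => c / t^2) (-2*c/s^3) s := by
  have h := (hasDerivAt_const s c).div (hasDerivAt_pow 2 s) (pow_ne_zero 2 hs)
  refine h.congr_deriv (Eq.symm ?_)
  field_simp
  ring

lemma hd_g11 (β k s : ℝ) (hs : 0 < s) :
    HasDerivAt (fun t : ℝ => β^2/t^2 * t^(2*k)) ((2*k-2)*β^2*(s^k)^2/s^3) s := by
  have h := (hd_div_sq (β^2) s hs.ne').mul
    (Real.hasDerivAt_rpow_const (x := s) (p := 2*k) (Or.inl hs.ne'))
  refine h.congr_deriv (Eq.symm ?_)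
  rw [rpow_two_mul k hs, Real.rpow_sub hs, Real.rpow_one, rpow_two_mul k hs]
  field_simp
  ring

/-- `∂₂` of the Siklos metric entries. -/
noncomputable def dsikM (β k s : ℝ) : Matrix (Fin 4) (Fin 4) ℝ :=
  !![0, -2*β^2/s^3, 0, 0;
     -2*β^2/s^3, (2*k-2)*β^2*(s^k)^2/s^3, 0, 0;
     0, 0, -2*β^2/s^3, 0;
     0, 0, 0, -2*β^2/s^3]

lemma pd_sik (β k : ℝ) (x : Fin 4 → ℝ) (hx : 0 < x 2) (i l j : Fin 4) :
    pd i (fun y => siklos β (fun _ b _ => b ^ (2*k)) y l j) x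
      = if i = 2 then dsikM β k (x 2) l j else 0 := by
  unfold pd
  simp only [siklos_eq]
  fin_cases i
  · simp [Function.update_of_ne, sikM]
  · simp [Function.update_of_ne, sikM]
  · simp only [Function.update_self, if_pos]
    fin_cases l <;> fin_cases j <;>
      simp [sikM, dsikM, Matrix.vecHead, Matrix.vecTail,
        (hd_div_sq (β^2) (x 2) hx.ne').deriv, (hd_g11 β k (x 2) hx).deriv]
  · simp [Function.update_of_ne, sikM]

/-- Christoffel symbols of the Siklos metric: `GamM k s c i j = Γᶜᵢⱼ`. -/
noncomputable def GamM (k s : ℝ) : Fin 4 → Fin 4 → Fin 4 → ℝ :=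
  ![![![0,0,-1/s,0], ![0,0,k*(s^k)^2/s,0], ![-1/s,k*(s^k)^2/s,0,0], ![0,0,0,0]],
    ![![0,0,0,0], ![0,0,-1/s,0], ![0,-1/s,0,0], ![0,0,0,0]],
    ![![0,1/s,0,0], ![1/s,-(k-1)*(s^k)^2/s,0,0], ![0,0,-1/s,0], ![0,0,0,1/s]],
    ![![0,0,0,0], ![0,0,0,0], ![0,0,0,-1/s], ![0,0,-1/s,0]]]

lemma chris_sik (β k : ℝ) (hβ : β ≠ 0) (x : Fin 4 → ℝ) (hx : 0 < x 2) (c i j : Fin 4) :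
    christoffel (siklos β (fun _ b _ => b ^ (2*k))) x c i j = GamM k (x 2) c i j := by
  have hs : x 2 ≠ 0 := hx.ne'
  have hP : (x 2)^k ≠ 0 := (Real.rpow_pos_of_pos hx k).ne'
  unfold christoffel
  rw [sik_inv β k hβ x hx]
  fin_cases c <;> fin_cases i <;> fin_cases j <;>
    · simp [Fin.sum_univ_four, pd_sik β k x hx, sikInvM, dsikM, GamM,
        Matrix.vecHead, Matrix.vecTail]
      try field_simp
      try ring

lemma pd_congr {f g : (Fin 3 → ℝ) → ℝ} (i : Fin 3) (u : Fin 3 → ℝ) (hu : 0 < u 2)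
    (h : ∀ v, 0 < v 2 → f v = g v) : pd i f u = pd i g u := by
  unfold pd
  apply Filter.EventuallyEq.deriv_eq
  by_cases hi : i = 2
  · subst hi
    filter_upwards [eventually_gt_nhds hu] with t ht
    exact h _ (by simpa using ht)
  · filter_upwards with t
    exact h _ (by rwa [Function.update_of_ne (Ne.symm hi)])

/-- Tangent vectors of `F`. -/
noncomputable def Evec (β k : ℝ) (u : Fin 3 → ℝ) : Fin 3 → Fin 4 → ℝ :=
  ![![1,0,0,0], ![0,0,0,-(u 2)/β], ![0, -((u 2)^k)⁻¹, 1, -(u 1)/β]]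

lemma hd_F1 (k s : ℝ) (hk : k ≠ 1) (hs : 0 < s) :
    HasDerivAt (fun t : ℝ => t^(1-k)/(k-1)) (-((s^k)⁻¹)) s := by
  have h := (Real.hasDerivAt_rpow_const (x := s) (p := 1-k) (Or.inl hs.ne')).div_const (k-1)
  refine h.congr_deriv (Eq.symm ?_)
  rw [show (1-k-1 : ℝ) = -k by ring, Real.rpow_neg hs.le]
  have hk1 : k - 1 ≠ 0 := sub_ne_zero.mpr hk
  field_simp
  ring

lemma deriv_hmul (a s : ℝ) : deriv (HMul.hMul a) s = a := by
  have : (HMul.hMul a : ℝ → ℝ) = fun t => a * t := rfl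
  rw [this, deriv_const_mul_field']
  simp

lemma Fu_eq (β k : ℝ) (hk : k ≠ 1) (F : (Fin 3 → ℝ) → Fin 4 → ℝ)
    (hF : F = fun u => ![u 0, u 2 ^ (1 - k) / (k - 1), u 2, -u 1 * u 2 / β])
    (u : Fin 3 → ℝ) (hu : 0 < u 2) (i : Fin 3) (m : Fin 4) :
    Fu F i u m = Evec β k u i m := by
  subst hF
  unfold Fu pd
  fin_cases i <;> fin_cases m <;>
    simp [Evec, Function.update_self, Function.update_of_ne, Matrix.vecHead, Matrix.vecTail,
      (hd_F1 k (u 2) hk hu).deriv, deriv_const', deriv_const_mul_field', deriv_hmul]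

lemma hd_F2 (k s : ℝ) (hs : 0 < s) :
    HasDerivAt (fun t : ℝ => -((t^k)⁻¹)) (k*((s^k)⁻¹)/s) s := by
  have hP : (s:ℝ)^k ≠ 0 := (Real.rpow_pos_of_pos hs k).ne'
  have h := ((Real.hasDerivAt_rpow_const (x := s) (p := k) (Or.inl hs.ne')).inv hP).neg
  refine h.congr_deriv (Eq.symm ?_)
  rw [Real.rpow_sub hs, Real.rpow_one]
  field_simp

/-- Closed form of the ambient covariant derivatives `DᵢF_{uⱼ}`. -/
noncomputable def Dvec (β k : ℝ) (u : Fin 3 → ℝ) : Fin 3 → Fin 3 → Fin 4 → ℝ :=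
  ![![![0,0,0,0], ![0,0,0,0], ![-1/u 2, 0, -((u 2)^k)⁻¹/u 2, 0]],
    ![![0,0,0,0], ![0,0,u 2/β^2,0], ![0,0,u 1/β^2,0]],
    ![![-1/u 2, 0, -((u 2)^k)⁻¹/u 2, 0], ![0,0,u 1/β^2,0],
      ![-2*k*(u 2)^k/u 2, (k+2)*((u 2)^k)⁻¹/u 2, -k/u 2 + (u 1)^2/(u 2*β^2), 2*u 1/(u 2*β)]]]

lemma ambD_eq (β k : ℝ) (hβ : β ≠ 0) (hk : k ≠ 1) (F : (Fin 3 → ℝ) → Fin 4 → ℝ)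
    (hF : F = fun u => ![u 0, u 2 ^ (1 - k) / (k - 1), u 2, -u 1 * u 2 / β])
    (u : Fin 3 → ℝ) (hu : 0 < u 2) (i j : Fin 3) (m : Fin 4) :
    ambD β (fun _ b _ => b ^ (2*k)) F i j u m = Dvec β k u i j m := by
  have hFu2 : 0 < (F u) 2 := by rw [hF]; simpa using hu
  have hF2 : (F u) 2 = u 2 := by rw [hF]; simp
  have hP : (u 2)^k ≠ 0 := (Real.rpow_pos_of_pos hu k).ne'
  have hs : u 2 ≠ 0 := hu.ne'
  unfold ambD
  have h1 : pd i (fun v => Fu F j v m) u = pd i (fun v => Evec β k v j m) u :=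
    pd_congr i u hu (fun v hv => funext_iff.mp (funext fun m' => Fu_eq β k hk F hF v hv j m') m)
  rw [h1]
  simp only [chris_sik β k hβ (F u) hFu2, Fu_eq β k hk F hF u hu, hF2, Fin.sum_univ_four]
  unfold pd
  fin_cases i <;> fin_cases j <;> fin_cases m <;>
    · simp [Evec, GamM, Dvec, Matrix.vecHead, Matrix.vecTail,
        Function.update_self, Function.update_of_ne,
        deriv_const', deriv_hmul, deriv_div_const, (hd_F2 k (u 2) hu).deriv]
      try field_simp
      try ring
      try exact Or.inl trivial

/-- Closed form of the induced metric. -/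
noncomputable def GindM (β k : ℝ) (u : Fin 3 → ℝ) : Matrix (Fin 3) (Fin 3) ℝ :=
  !![0, 0, -β^2*((u 2)^k)⁻¹/(u 2)^2;
     0, 1, u 1/u 2;
     -β^2*((u 2)^k)⁻¹/(u 2)^2, u 1/u 2, (2*β^2+(u 1)^2)/(u 2)^2]

lemma rpow_add_one (s k : ℝ) (hs : 0 < s) : s ^ (k+1) = s^k * s := by
  rw [Real.rpow_add hs, Real.rpow_one]

lemma sff_eq (β k : ℝ) (hβ : β ≠ 0) (hk : k ≠ 1) (F ξ : (Fin 3 → ℝ) → Fin 4 → ℝ)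
    (hF : F = fun u => ![u 0, u 2 ^ (1 - k) / (k - 1), u 2, -u 1 * u 2 / β])
    (hξ : ξ = fun u => ![u 2 ^ (k + 1) / β, 0, u 2 / β, 0])
    (u : Fin 3 → ℝ) (hu : 0 < u 2) (i j : Fin 3) :
    sff β (fun _ b _ => b ^ (2*k)) F ξ i j u = GindM β k u i j / β := by
  have hF2 : (F u) 2 = u 2 := by rw [hF]; simp
  have hP : (u 2)^k ≠ 0 := (Real.rpow_pos_of_pos hu k).ne'
  have hs : u 2 ≠ 0 := hu.ne'
  unfold sff gApply
  simp only [siklos_eq, hF2, ambD_eq β k hβ hk F hF u hu i j, hξ, Fin.sum_univ_four]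
  fin_cases i <;> fin_cases j <;>
    · simp [sikM, Dvec, GindM, Matrix.vecHead, Matrix.vecTail,
        rpow_add_one (u 2) k hu, rpow_two_mul k hu]
      try field_simp
      try ring
      try exact Or.inl trivial

lemma ind_eq (β k : ℝ) (hβ : β ≠ 0) (hk : k ≠ 1) (F : (Fin 3 → ℝ) → Fin 4 → ℝ)
    (hF : F = fun u => ![u 0, u 2 ^ (1 - k) / (k - 1), u 2, -u 1 * u 2 / β])
    (u : Fin 3 → ℝ) (hu : 0 < u 2) :
    inducedMetric β (fun _ b _ => b ^ (2*k)) F u = GindM β k u := by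
  have hF2 : (F u) 2 = u 2 := by rw [hF]; simp
  have hP : (u 2)^k ≠ 0 := (Real.rpow_pos_of_pos hu k).ne'
  have hs : u 2 ≠ 0 := hu.ne'
  ext i j
  unfold inducedMetric gApply
  simp only [Matrix.of_apply, siklos_eq, hF2, Fu_eq β k hk F hF u hu, Fin.sum_univ_four]
  fin_cases i <;> fin_cases j <;>
    · simp [sikM, Evec, GindM, Matrix.vecHead, Matrix.vecTail, rpow_two_mul k hu]
      try field_simp
      try ring

noncomputable def GindInv (β k : ℝ) (u : Fin 3 → ℝ) : Matrix (Fin 3) (Fin 3) ℝ :=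
  !![-2*((u 2)^k)^2*(u 2)^2/β^2, u 1*u 2*(u 2)^k/β^2, -(u 2)^k*(u 2)^2/β^2;
     u 1*u 2*(u 2)^k/β^2, 1, 0;
     -(u 2)^k*(u 2)^2/β^2, 0, 0]

lemma ind_inv (β k : ℝ) (hβ : β ≠ 0) (hk : k ≠ 1) (F : (Fin 3 → ℝ) → Fin 4 → ℝ)
    (hF : F = fun u => ![u 0, u 2 ^ (1 - k) / (k - 1), u 2, -u 1 * u 2 / β])
    (u : Fin 3 → ℝ) (hu : 0 < u 2) :
    (inducedMetric β (fun _ b _ => b ^ (2*k)) F u)⁻¹ = GindInv β k u := by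
  have hP : (u 2)^k ≠ 0 := (Real.rpow_pos_of_pos hu k).ne'
  have hs : u 2 ≠ 0 := hu.ne'
  rw [ind_eq β k hβ hk F hF u hu]
  apply Matrix.inv_eq_right_inv
  ext i j
  fin_cases i <;> fin_cases j <;>
    · simp [GindM, GindInv, Matrix.mul_apply, Fin.sum_univ_three,
        Matrix.vecHead, Matrix.vecTail]
      try field_simp
      try ring

/-- `∂ₘ` of the induced metric entries. -/
noncomputable def dGind (β k : ℝ) (u : Fin 3 → ℝ) : Fin 3 → Matrix (Fin 3) (Fin 3) ℝ :=
  ![0,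
    !![0,0,0; 0,0,1/u 2; 0,1/u 2,2*u 1/(u 2)^2],
    !![0,0,(k+2)*β^2*((u 2)^k)⁻¹/(u 2)^3;
       0,0,-u 1/(u 2)^2;
       (k+2)*β^2*((u 2)^k)⁻¹/(u 2)^3, -u 1/(u 2)^2, -2*(2*β^2+(u 1)^2)/(u 2)^3]]

lemma hd_c_inv_div_sq (c k s : ℝ) (hs : 0 < s) :
    HasDerivAt (fun t : ℝ => c*(t^k)⁻¹/t^2) (-(k+2)*c*((s^k)⁻¹)/s^3) s := by
  have hP : (s:ℝ)^k ≠ 0 := (Real.rpow_pos_of_pos hs k).ne'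
  have h1 := (Real.hasDerivAt_rpow_const (x := s) (p := k) (Or.inl hs.ne')).inv hP
  have h2 := (h1.const_mul c).div (hasDerivAt_pow 2 s) (pow_ne_zero 2 hs.ne')
  refine h2.congr_deriv (Eq.symm ?_)
  rw [Real.rpow_sub hs, Real.rpow_one]
  simp only [Pi.inv_apply]
  field_simp
  ring

lemma hd_c_div_sq' (c s : ℝ) (hs : s ≠ 0) :
    HasDerivAt (fun t : ℝ => c/t^2) (-2*c/s^3) s := hd_div_sq c s hs

lemma hd_div_id (c s : ℝ) (hs : s ≠ 0) :
    HasDerivAt (fun t : ℝ => c/t) (-c/s^2) s := by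
  have h := (hasDerivAt_const s c).div (hasDerivAt_id s) hs
  refine h.congr_deriv (Eq.symm ?_)
  simp only [id]
  field_simp
  ring

lemma hd_form2 (β k s : ℝ) (hs : 0 < s) :
    HasDerivAt (fun t : ℝ => -β^2/(t^k*t^2)) ((k+2)*β^2*((s^k)⁻¹)/s^3) s := by
  have hP : (s:ℝ)^k ≠ 0 := (Real.rpow_pos_of_pos hs k).ne'
  have h1 := (Real.hasDerivAt_rpow_const (x:=s) (p:=k) (Or.inl hs.ne')).mul (hasDerivAt_pow 2 s)
  have h2 := (hasDerivAt_const s (-β^2)).div h1 (mul_ne_zero hP (pow_ne_zero 2 hs.ne'))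
  refine h2.congr_deriv (Eq.symm ?_)
  rw [Real.rpow_sub hs, Real.rpow_one]
  simp only [Pi.mul_apply]
  field_simp
  ring

lemma hd_form3 (β k s : ℝ) (hs : 0 < s) :
    HasDerivAt (fun t : ℝ => -(β^2*(t^k)⁻¹)/t^2) ((k+2)*β^2*((s^k)⁻¹)/s^3) s := by
  have h := hd_c_inv_div_sq (-β^2) k s hs
  have h2 : (fun t : ℝ => -(β^2*(t^k)⁻¹)/t^2) = fun t : ℝ => (-β^2)*(t^k)⁻¹/t^2 := by
    funext t; ring
  rw [h2]
  refine h.congr_deriv (Eq.symm ?_)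
  ring

lemma pd_Gind (β k : ℝ) (u : Fin 3 → ℝ) (hu : 0 < u 2) (m : Fin 3) (l j : Fin 3) :
    pd m (fun v => GindM β k v l j) u = dGind β k u m l j := by
  have hs : u 2 ≠ 0 := hu.ne'
  unfold pd
  fin_cases m <;> fin_cases l <;> fin_cases j <;>
    · simp [GindM, dGind, Matrix.vecHead, Matrix.vecTail,
        Function.update_self, Function.update_of_ne,
        deriv_const', deriv_hmul, deriv_div_const,
        (hd_c_inv_div_sq (-β^2) k (u 2) hu).deriv, (hd_form3 β k (u 2) hu).deriv, (hd_div_sq (2*β^2+(u 1)^2) (u 2) hs).deriv,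
        (hd_div_id (u 1) (u 2) hs).deriv]
      try field_simp
      try ring

lemma pd_ind (β k : ℝ) (hβ : β ≠ 0) (hk : k ≠ 1) (F : (Fin 3 → ℝ) → Fin 4 → ℝ)
    (hF : F = fun u => ![u 0, u 2 ^ (1 - k) / (k - 1), u 2, -u 1 * u 2 / β])
    (u : Fin 3 → ℝ) (hu : 0 < u 2) (m l j : Fin 3) :
    pd m (fun v => inducedMetric β (fun _ b _ => b ^ (2*k)) F v l j) u
      = dGind β k u m l j := by
  refine (pd_congr m u hu (fun v hv => ?_)).trans (pd_Gind β k u hu m l j)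
  rw [ind_eq β k hβ hk F hF v hv]

lemma pd_sff (β k : ℝ) (hβ : β ≠ 0) (hk : k ≠ 1) (F ξ : (Fin 3 → ℝ) → Fin 4 → ℝ)
    (hF : F = fun u => ![u 0, u 2 ^ (1 - k) / (k - 1), u 2, -u 1 * u 2 / β])
    (hξ : ξ = fun u => ![u 2 ^ (k + 1) / β, 0, u 2 / β, 0])
    (u : Fin 3 → ℝ) (hu : 0 < u 2) (m i j : Fin 3) :
    pd m (fun v => sff β (fun _ b _ => b ^ (2*k)) F ξ i j v) u
      = dGind β k u m i j / β := by
  have h1 := pd_congr (f := fun v => sff β (fun _ b _ => b ^ (2*k)) F ξ i j v)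
    (g := fun v => GindM β k v i j / β) m u hu
    (fun v hv => sff_eq β k hβ hk F ξ hF hξ v hv i j)
  rw [h1]
  unfold pd
  rw [deriv_div_const]
  rw [show deriv (fun t => GindM β k (Function.update u m t) i j) (u m)
      = pd m (fun v => GindM β k v i j) u from rfl, pd_Gind β k u hu m i j]

lemma nablah_zero (β k : ℝ) (hβ : β ≠ 0) (hk : k ≠ 1) (F ξ : (Fin 3 → ℝ) → Fin 4 → ℝ)
    (hF : F = fun u => ![u 0, u 2 ^ (1 - k) / (k - 1), u 2, -u 1 * u 2 / β])
    (hξ : ξ = fun u => ![u 2 ^ (k + 1) / β, 0, u 2 / β, 0])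
    (u : Fin 3 → ℝ) (hu : 0 < u 2) (c i j : Fin 3) :
    nablah β (fun _ b _ => b ^ (2*k)) F ξ c i j u = 0 := by
  have hP : (u 2)^k ≠ 0 := (Real.rpow_pos_of_pos hu k).ne'
  have hs : u 2 ≠ 0 := hu.ne'
  unfold nablah christoffel
  rw [ind_inv β k hβ hk F hF u hu]
  simp only [Fin.sum_univ_three, pd_ind β k hβ hk F hF u hu,
    pd_sff β k hβ hk F ξ hF hξ u hu, sff_eq β k hβ hk F ξ hF hξ u hu]
  fin_cases c <;> fin_cases i <;> fin_cases j <;>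
    · simp [GindInv, dGind, GindM, Matrix.vecHead, Matrix.vecTail]
      try field_simp
      try ring

end S18
end

/-- for `H(x₂,x₃,x₄) = x₃^{2k}` with `k ≠ 1`, the immersion
`F(u) = (u₁, u₃^{1−k}/(k−1), u₃, −u₂u₃/β)` is parallel and not totally geodesic. -/
theorem stmt_18 (β : ℝ) (hβ : 0 < β) (k : ℝ) (hk : k ≠ 1)
    (H : ℝ → ℝ → ℝ → ℝ) (hH : H = fun _ b _ => b ^ (2 * k))
    (F ξ : (Fin 3 → ℝ) → Fin 4 → ℝ)
    (hF : F = fun u => ![u 0, u 2 ^ (1 - k) / (k - 1), u 2, -u 1 * u 2 / β])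
    (hξ : ξ = fun u => ![u 2 ^ (k + 1) / β, 0, u 2 / β, 0]) :
    (∀ u : Fin 3 → ℝ, 0 < u 2 →
      gApply (siklos β H (F u)) (ξ u) (ξ u) = 1 ∧
      ∀ i : Fin 3, gApply (siklos β H (F u)) (ξ u) (Fu F i u) = 0) ∧
    (∀ u : Fin 3 → ℝ, 0 < u 2 → ∀ k' i j : Fin 3, nablah β H F ξ k' i j u = 0) ∧
    ¬(∀ u : Fin 3 → ℝ, 0 < u 2 → ∀ i j : Fin 3, sff β H F ξ i j u = 0) := by
  subst hH
  have hβ' : β ≠ 0 := hβ.ne'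
  refine ⟨?_, fun u hu c i j => S18.nablah_zero β k hβ' hk F ξ hF hξ u hu c i j, ?_⟩
  · intro u hu
    have hF2 : (F u) 2 = u 2 := by rw [hF]; simp
    have hP : (u 2)^k ≠ 0 := (Real.rpow_pos_of_pos hu k).ne'
    have hs : u 2 ≠ 0 := hu.ne'
    constructor
    · unfold gApply
      simp only [S18.siklos_eq, hF2, hξ, Fin.sum_univ_four]
      simp [S18.sikM, Matrix.vecHead, Matrix.vecTail, S18.rpow_add_one (u 2) k hu,
        S18.rpow_two_mul k hu]
      field_simp
    · intro i
      unfold gApply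
      simp only [S18.siklos_eq, hF2, hξ, Fin.sum_univ_four,
        S18.Fu_eq β k hk F hF u hu]
      fin_cases i <;>
        · simp [S18.sikM, S18.Evec, Matrix.vecHead, Matrix.vecTail,
            S18.rpow_add_one (u 2) k hu, S18.rpow_two_mul k hu]
          try field_simp
          try ring
  · intro hcon
    have h1 : (0:ℝ) < (![0,0,1] : Fin 3 → ℝ) 2 := by simp
    have h2 := hcon ![0,0,1] h1 1 1
    rw [S18.sff_eq β k hβ' hk F ξ hF hξ _ h1 1 1] at h2
    simp [S18.GindM] at h2
    exact hβ' h2
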